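/- If R₀ > 1, then the point (S*, I*, Q*, R*, B*) with S* = a₁ρ/(ηD̄), I* = βΛa₂a₃(R₀−1)/(R₀D̄), Q* = βΛa₃δ(R₀−1)/(R₀D̄), R* = βΛδε(R₀−1)/(R₀D̄), B* = βΛηa₂a₃(R₀−1)/(R₀D̄d) satisfies the equilibrium equations of the SIQRB model: Λ − βB*S*/(κ+B*) + ωR* − μS* = 0, βB*S*/(κ+B*) − a₁I* = 0, δI* − a₂Q* = 0, εQ* − a₃R* = 0, and ηI* − dB* = 0. -/

import Mathlib

set_option maxHeartbeats 4000000


/-- If `R₀ > 1`, the endemic point `(S*, I*, Q*, R*, B*)` satisfies the equilibrium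
equations of the SIQRB model. -/
theorem siqrb_endemic_is_equilibrium
    (Λ μ β κ η d ω δ ε α₁ α₂ : ℝ)
    (hΛ : 0 < Λ) (hμ : 0 < μ) (hβ : 0 < β) (hκ : 0 < κ) (hη : 0 < η) (hd : 0 < d)
    (hω : 0 ≤ ω) (hδ : 0 ≤ δ) (hε : 0 ≤ ε) (hα₁ : 0 ≤ α₁) (hα₂ : 0 ≤ α₂)
    (a₁ a₂ a₃ ρ D R₀ Sstar Istar Qstar Rstar Bstar : ℝ)
    (ha₁ : a₁ = δ + α₁ + μ) (ha₂ : a₂ = ε + α₂ + μ) (ha₃ : a₃ = ω + μ)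
    (hρ : ρ = Λ * η * a₂ * a₃ + κ * d * (a₁ * a₂ * a₃ - δ * ε * ω))
    (hD : D = a₁ * a₂ * a₃ * μ + β * (a₁ * a₂ * a₃ - δ * ε * ω))
    (hR₀ : R₀ = β * Λ * η / (μ * κ * d * a₁))
    (hR₀gt : 1 < R₀)
    (hS : Sstar = a₁ * ρ / (η * D))
    (hI : Istar = β * Λ * a₂ * a₃ * (R₀ - 1) / (R₀ * D))
    (hQ : Qstar = β * Λ * a₃ * δ * (R₀ - 1) / (R₀ * D))
    (hR : Rstar = β * Λ * δ * ε * (R₀ - 1) / (R₀ * D))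
    (hB : Bstar = β * Λ * η * a₂ * a₃ * (R₀ - 1) / (R₀ * D * d)) :
    Λ - β * Bstar * Sstar / (κ + Bstar) + ω * Rstar - μ * Sstar = 0 ∧
      β * Bstar * Sstar / (κ + Bstar) - a₁ * Istar = 0 ∧
      δ * Istar - a₂ * Qstar = 0 ∧
      ε * Qstar - a₃ * Rstar = 0 ∧
      η * Istar - d * Bstar = 0 := by
  have ha₁p : 0 < a₁ := by rw [ha₁]; linarith
  have ha₂p : 0 < a₂ := by rw [ha₂]; linarith
  have ha₃p : 0 < a₃ := by rw [ha₃]; linarith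
  have hdiff : 0 < a₁ * a₂ * a₃ - δ * ε * ω := by
    rw [ha₁, ha₂, ha₃]
    nlinarith [mul_pos hμ (mul_pos hμ hμ), mul_nonneg hδ hε, mul_nonneg hε hω,
      mul_nonneg hδ hω, mul_nonneg (mul_nonneg hδ hε) hω,
      mul_nonneg (mul_nonneg hδ hε) hμ.le, mul_nonneg (mul_nonneg hδ hω) hμ.le,
      mul_nonneg (mul_nonneg hε hω) hμ.le, mul_nonneg hα₁ hα₂,
      mul_nonneg (mul_nonneg hδ hα₂) hω, mul_nonneg (mul_nonneg hα₁ hε) hω,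
      mul_nonneg (mul_nonneg hα₁ hα₂) hω, mul_nonneg hδ hμ.le, mul_nonneg hε hμ.le,
      mul_nonneg hω hμ.le, mul_nonneg hα₁ hμ.le, mul_nonneg hα₂ hμ.le]
  have hDp : 0 < D := by rw [hD]; positivity
  have hR₀p : 0 < R₀ := by linarith
  have hBp : 0 < Bstar := by
    rw [hB]
    have : 0 < R₀ - 1 := by linarith
    positivity
  have hKB : κ + Bstar ≠ 0 := by positivity
  have hμ' := hμ.ne'
  have hκ' := hκ.ne'
  have hd' := hd.ne'
  have hη' := hη.ne'
  have hD' := hDp.ne'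
  have hR' := hR₀p.ne'
  have ha₁' := ha₁p.ne'
  subst hρ hD hR₀
  have key : β * Bstar * Sstar = a₁ * Istar * (κ + Bstar) := by
    rw [hS, hI, hB]
    generalize hDg : a₁ * a₂ * a₃ * μ + β * (a₁ * a₂ * a₃ - δ * ε * ω) = D at hS hI hB hR hD'
    field_simp
    subst hDg
    ring
  have lin : Λ + ω * Rstar - μ * Sstar - a₁ * Istar = 0 := by
    rw [hS, hI, hR]
    generalize hDg : a₁ * a₂ * a₃ * μ + β * (a₁ * a₂ * a₃ - δ * ε * ω) = D at hS hI hB hR hD'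
    field_simp
    subst hDg
    ring
  have e2 : β * Bstar * Sstar / (κ + Bstar) = a₁ * Istar := by
    rw [div_eq_iff hKB]; exact key
  refine ⟨by rw [e2]; linarith, by rw [e2]; ring, ?_, ?_, ?_⟩
  · rw [hI, hQ]; field_simp; ring
  · rw [hQ, hR]; field_simp; ring
  · rw [hI, hB]; field_simp; ring
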